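/- Let K be a number field of degree d and fix integers m ≥ k ≥ 1. There exists a constant C > 0, independent of Λ, such that for every O_K-module lattice Λ ⊆ K_ℝ^m of O_K-rank k with successive K-minima l₁, …, l_k, the covering radius satisfies ρ(Λ) ≤ C·‖l_k‖. -/

import Mathlib

noncomputable section
open NumberField NumberField.InfinitePlace MeasureTheory Module Submodule Matrix
attribute [local instance] Classical.propDecidable
set_option synthInstance.maxHeartbeats 1000000
set_option maxHeartbeats 1000000

/-! Setup: the space `K_ℝ = K ⊗ ℝ`, realized as the mixed space `ℝ^{r₁} × ℂ^{r₂}`, together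
with the Euclidean structure given by `‖x‖² = |Δ_K|^{-2/d}·Tr(x·x̄)`, extended coordinatewise
to vectors and matrices over `K_ℝ`. This Euclidean structure is realized through explicit
linear coordinates with values in `EuclideanSpace ℝ _`. -/

namespace Paper

variable (K : Type) [Field K] [NumberField K]

/-- The mixed space `K ⊗ ℝ ≅ ℝ^{r₁} × ℂ^{r₂}`. -/
abbrev MS : Type := NumberField.mixedEmbedding.mixedSpace K

/-- Real-coordinate index type for `K_ℝ`: one coordinate for each real place and two for each
complex place. -/
abbrev RIx : Type := {w : InfinitePlace K // IsReal w} ⊕ ({w : InfinitePlace K // IsComplex w} × Bool)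

/-- The scaling factor `|Δ_K|^{-1/d}`. -/
def sK : ℝ := (Int.natAbs (NumberField.discr K) : ℝ) ^ (-(1:ℝ) / (finrank ℚ K))

lemma sK_pos : 0 < sK K := by
  apply Real.rpow_pos_of_pos
  have := NumberField.discr_ne_zero K
  exact_mod_cast Int.natAbs_pos.mpr this

/-- Coordinates of `K_ℝ` realizing the Euclidean structure `‖x‖² = |Δ_K|^{-2/d}·Tr(x·x̄)`:
a real place `v` contributes the coordinate `|Δ_K|^{-1/d}·x_v` and a complex place `w`
contributes the two coordinates `|Δ_K|^{-1/d}·√2·Re(x_w)` and `|Δ_K|^{-1/d}·√2·Im(x_w)`,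
so that the standard Euclidean norm of the coordinates equals the norm above. -/
def eucMap : MS K ≃ₗ[ℝ] EuclideanSpace ℝ (RIx K) where
  toFun x := WithLp.toLp 2 fun (q : RIx K) => (Sum.rec (fun v => sK K * x.1 v)
    (fun p => (sK K * Real.sqrt 2) * (if p.2 then (x.2 p.1).im else (x.2 p.1).re)) q : ℝ)
  invFun y := (fun v => (sK K)⁻¹ * y (.inl v),
               fun w => ⟨(sK K * Real.sqrt 2)⁻¹ * y (.inr (w, false)),
                         (sK K * Real.sqrt 2)⁻¹ * y (.inr (w, true))⟩)
  map_add' x y := by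
    ext q
    rcases q with v | ⟨w, b⟩
    · show sK K * (x.1 v + y.1 v) = sK K * x.1 v + sK K * y.1 v
      ring
    · show (sK K * Real.sqrt 2) * (if b then (x.2 w + y.2 w).im else (x.2 w + y.2 w).re) = _
      cases b <;> simp [Complex.add_re, Complex.add_im] <;> ring
  map_smul' c x := by
    ext q
    rcases q with v | ⟨w, b⟩
    · show sK K * (c * x.1 v) = c * (sK K * x.1 v)
      ring
    · show (sK K * Real.sqrt 2) * (if b then (c • x.2 w).im else (c • x.2 w).re) = _
      cases b <;> simp [Complex.smul_re, Complex.smul_im] <;> ring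
  left_inv x := by
    have h1 : sK K ≠ 0 := ne_of_gt (sK_pos K)
    have h2 : sK K * Real.sqrt 2 ≠ 0 := by
      have h3 : (0:ℝ) < Real.sqrt 2 := Real.sqrt_pos.mpr (by norm_num)
      positivity
    refine Prod.ext (funext fun v => ?_) (funext fun w => ?_)
    · show (sK K)⁻¹ * (sK K * x.1 v) = x.1 v
      field_simp
    · show (⟨(sK K * Real.sqrt 2)⁻¹ * ((sK K * Real.sqrt 2) * (x.2 w).re),
            (sK K * Real.sqrt 2)⁻¹ * ((sK K * Real.sqrt 2) * (x.2 w).im)⟩ : ℂ) = x.2 w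
      apply Complex.ext <;> field_simp
  right_inv y := by
    have h1 : sK K ≠ 0 := ne_of_gt (sK_pos K)
    have h2 : sK K * Real.sqrt 2 ≠ 0 := by
      have h3 : (0:ℝ) < Real.sqrt 2 := Real.sqrt_pos.mpr (by norm_num)
      positivity
    ext q
    rcases q with v | ⟨w, b⟩
    · show sK K * ((sK K)⁻¹ * y (.inl v)) = y (.inl v)
      field_simp
    · cases b
      · show (sK K * Real.sqrt 2) * ((sK K * Real.sqrt 2)⁻¹ * y (.inr (w, false))) = _
        field_simp
      · show (sK K * Real.sqrt 2) * ((sK K * Real.sqrt 2)⁻¹ * y (.inr (w, true))) = _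
        field_simp

/-- Euclidean coordinates for vectors in `K_ℝ^m`. -/
def eucVec (m : ℕ) : (Fin m → MS K) ≃ₗ[ℝ] EuclideanSpace ℝ (Fin m × RIx K) where
  toFun x := WithLp.toLp 2 fun (p : Fin m × RIx K) => eucMap K (x p.1) p.2
  invFun y := fun i => (eucMap K).symm (WithLp.toLp 2 fun q => y (i, q))
  map_add' x y := by
    ext p
    show eucMap K (x p.1 + y p.1) p.2 = eucMap K (x p.1) p.2 + eucMap K (y p.1) p.2
    rw [map_add]; rfl
  map_smul' c x := by
    ext p
    show eucMap K (c • x p.1) p.2 = c * eucMap K (x p.1) p.2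
    rw [_root_.map_smul]; rfl
  left_inv x := by
    funext i
    show (eucMap K).symm (WithLp.toLp 2 fun q => eucMap K (x i) q) = x i
    exact (eucMap K).symm_apply_apply (x i)
  right_inv y := by
    ext p
    show eucMap K ((eucMap K).symm (WithLp.toLp 2 fun q => y (p.1, q))) p.2 = y p
    rw [(eucMap K).apply_symm_apply] <;> rfl

/-- Euclidean coordinates for matrices in `M_{n×m}(K_ℝ)`. -/
def eucMat (n m : ℕ) :
    Matrix (Fin n) (Fin m) (MS K) ≃ₗ[ℝ] EuclideanSpace ℝ (Fin n × Fin m × RIx K) where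
  toFun A := WithLp.toLp 2 fun (p : Fin n × Fin m × RIx K) => eucMap K (A p.1 p.2.1) p.2.2
  invFun y := Matrix.of fun i j => (eucMap K).symm (WithLp.toLp 2 fun q => y (i, j, q))
  map_add' x y := by
    ext p
    show eucMap K (x p.1 p.2.1 + y p.1 p.2.1) p.2.2 = _
    rw [map_add]; rfl
  map_smul' c x := by
    ext p
    show eucMap K (c • x p.1 p.2.1) p.2.2 = c * eucMap K (x p.1 p.2.1) p.2.2
    rw [_root_.map_smul]; rfl
  left_inv x := by
    funext i j
    show (eucMap K).symm (WithLp.toLp 2 fun q => eucMap K (x i j) q) = x i j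
    exact (eucMap K).symm_apply_apply (x i j)
  right_inv y := by
    ext p
    show eucMap K ((eucMap K).symm (WithLp.toLp 2 fun q => y (p.1, p.2.1, q))) p.2.2 = y p
    rw [(eucMap K).apply_symm_apply] <;> rfl

/-- The Euclidean norm on `K_ℝ^m` (the `l²`-norm from `‖x‖² = |Δ_K|^{-2/d}·Tr(x·x̄)`,
extended coordinatewise). -/
def vnorm {m : ℕ} (x : Fin m → MS K) : ℝ := ‖eucVec K m x‖

/-- The Euclidean norm on `M_{n×m}(K_ℝ)`. -/
def mnorm {n m : ℕ} (A : Matrix (Fin n) (Fin m) (MS K)) : ℝ := ‖eucMat K n m A‖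

/-- The embedding of `M_{n×m}(O_K)` into `M_{n×m}(K_ℝ)`. -/
def embMat {n m : ℕ} (A : Matrix (Fin n) (Fin m) (𝓞 K)) : Matrix (Fin n) (Fin m) (MS K) :=
  A.map (fun a => NumberField.mixedEmbedding K (algebraMap (𝓞 K) K a))

/-- The rank (over `K`) of a matrix with entries in `O_K`. -/
def rankOK {n m : ℕ} (A : Matrix (Fin n) (Fin m) (𝓞 K)) : ℕ :=
  (A.map (algebraMap (𝓞 K) K)).rank

end Paper

/-! Generic notions for Euclidean spaces: oscillation, admissible functions, integration over
subspaces (with respect to the induced Lebesgue measure), covering radius and height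
(covolume) of lattices. -/

namespace Paper

/-- The oscillation function `E_f(x, ε) = sup_{‖x−y‖ ≤ ε} |f(x)−f(y)|`. -/
def Ef {V : Type} [NormedAddCommGroup V] (f : V → ℝ) (x : V) (ε : ℝ) : ℝ :=
  ⨆ y : {y : V // ‖x - y‖ ≤ ε}, |f x - f (y : V)|

/-- Integral of `g` over the subspace `W ⊆ V` with respect to the Lebesgue measure induced
on `W` by the inner product of `V` (computed in an orthonormal coordinate system of `W`). -/
def subInt {V : Type} [NormedAddCommGroup V] [InnerProductSpace ℝ V] [FiniteDimensional ℝ V]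
    (W : Submodule ℝ V) (g : V → ℝ) : ℝ :=
  ∫ y : EuclideanSpace ℝ (Fin (Module.finrank ℝ W)),
    g (((stdOrthonormalBasis ℝ W).repr.symm y : W) : V)

/-- A function on a Euclidean space is admissible with constant `Cf` if it is compactly
supported, measurable, and for every `ε > 0` and every nonzero real subspace `W`, the
integral of its oscillation `E_f(·, ε)` over `W` is at most `Cf·ε`. -/
def IsAdmissible {V : Type} [NormedAddCommGroup V] [InnerProductSpace ℝ V]
    [FiniteDimensional ℝ V] [MeasurableSpace V] [BorelSpace V] (f : V → ℝ) (Cf : ℝ) : Prop :=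
  HasCompactSupport f ∧ Measurable f ∧ 0 < Cf ∧
    ∀ ε : ℝ, 0 < ε → ∀ W : Submodule ℝ V, W ≠ ⊥ →
      subInt W (fun x => Ef f x ε) ≤ Cf * ε

/-- The covering radius of a subset `S` of a normed space:
`ρ(S) = sup_{x ∈ span ℝ S} inf_{v ∈ S} ‖x−v‖`. -/
def covRadV {V : Type} [NormedAddCommGroup V] [Module ℝ V] (S : Set V) : ℝ :=
  ⨆ x : Submodule.span ℝ S, ⨅ v : S, ‖(x : V) - (v : V)‖

/-- The height `H(L) = vol((L⊗ℝ)/L)` of a `ℤ`-submodule `L` of a Euclidean space, computed as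
the covolume of the image of `L` in an orthonormal coordinate system of `span ℝ L`. -/
def hgtV {V : Type} [NormedAddCommGroup V] [InnerProductSpace ℝ V] [FiniteDimensional ℝ V]
    (L : Submodule ℤ V) : ℝ :=
  ZLattice.covolume
    ((L.comap (((Submodule.span ℝ (L : Set V)).subtype).restrictScalars ℤ)).map
      (((stdOrthonormalBasis ℝ (Submodule.span ℝ (L : Set V))).repr.toLinearEquiv.restrictScalars
        ℤ).toLinearMap)) MeasureTheory.volume

end Paper

/-! `O_K`-module lattices in `K_ℝ^m` and their successive `K`-minima. -/

namespace Paper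

variable (K : Type) [Field K] [NumberField K]

/-- The action of an algebraic integer on a vector of `K_ℝ^m` (coordinatewise
multiplication through the mixed embedding). -/
def okSmul {m : ℕ} (a : NumberField.RingOfIntegers K) (x : Fin m → MS K) : Fin m → MS K :=
  fun t => NumberField.mixedEmbedding K (algebraMap (NumberField.RingOfIntegers K) K a) * x t

/-- An `O_K`-module lattice in `K_ℝ^m`: a discrete additive subgroup stable under the
`O_K`-action. -/
def IsOKModuleLattice {m : ℕ} (Λ : Set (Fin m → MS K)) : Prop :=
  (0 : Fin m → MS K) ∈ Λ ∧ (∀ x ∈ Λ, ∀ y ∈ Λ, x + y ∈ Λ) ∧ (∀ x ∈ Λ, -x ∈ Λ) ∧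
  (∀ a : NumberField.RingOfIntegers K, ∀ x ∈ Λ, okSmul K a x ∈ Λ) ∧
  (∃ ε : ℝ, 0 < ε ∧ ∀ x ∈ Λ, vnorm K x < ε → x = 0)

/-- The subset `K·l₁ + ⋯ + K·l_i ⊆ K_ℝ^m` (`K`-span of the first `i` vectors). -/
def KSpanUpTo {m k : ℕ} (l : Fin k → (Fin m → MS K)) (i : ℕ) : Set (Fin m → MS K) :=
  {x | ∃ c : Fin k → K, x = fun t =>
    ∑ j ∈ Finset.univ.filter (fun j : Fin k => (j : ℕ) < i),
      NumberField.mixedEmbedding K (c j) * l j t}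

/-- `l₁, …, l_k` is a system of successive `K`-minima of `Λ`: each `l_i` belongs to `Λ`,
lies outside `K·l₁ + ⋯ + K·l_{i-1}`, and has minimal norm among such lattice vectors. -/
def IsSuccKMinima {m k : ℕ} (Λ : Set (Fin m → MS K)) (l : Fin k → (Fin m → MS K)) : Prop :=
  ∀ i : Fin k, l i ∈ Λ ∧ l i ∉ KSpanUpTo K l (i : ℕ) ∧
    ∀ v ∈ Λ, v ∉ KSpanUpTo K l (i : ℕ) → vnorm K (l i) ≤ vnorm K v

/-- The real subspace `K_ℝ·v` of the Euclidean model of `K_ℝ^m`. -/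
def lineR {m : ℕ} (v : Fin m → MS K) : Submodule ℝ (EuclideanSpace ℝ (Fin m × RIx K)) :=
  Submodule.span ℝ ((eucVec K m) '' {x | ∃ a : MS K, x = fun t => a * v t})

end Paper

/-! Auxiliary lemmas for the proof of the main theorem. -/

namespace CovAux

open Submodule Module Paper NumberField

lemma aux_finrank_int_eq {E : Type*} [NormedAddCommGroup E] [NormedSpace ℝ E]
    [FiniteDimensional ℝ E] (L : Submodule ℤ E) [DiscreteTopology L] :
    Module.finrank ℤ L = Module.finrank ℝ (Submodule.span ℝ (L : Set E)) := by
  let f := (span ℝ (L : Set E)).subtype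
  let L₀ := L.comap (f.restrictScalars ℤ)
  have h_img : L₀.map (f.restrictScalars ℤ) = L := by
    rw [Submodule.map_comap_eq_self]
    exact fun x hx ↦ LinearMap.mem_range.mpr ⟨⟨x, Submodule.subset_span hx⟩, rfl⟩
  have h_img' : f '' (L₀ : Set (span ℝ (L : Set E))) = (L : Set E) := by
    have := congrArg (SetLike.coe) h_img
    rwa [Submodule.map_coe] at this
  have hd : DiscreteTopology L₀ := by
    refine DiscreteTopology.preimage_of_continuous_injective (L : Set E) ?_ (injective_subtype _)
    exact LinearMap.continuous_of_finiteDimensional f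
  have hz : IsZLattice ℝ L₀ := ⟨by
    rw [← (Submodule.map_injective_of_injective (injective_subtype _)).eq_iff, Submodule.map_span,
      Submodule.map_top, range_subtype, h_img']⟩
  have hinj : Function.Injective (f.restrictScalars ℤ) := Submodule.injective_subtype _
  rw [← ZLattice.rank ℝ L₀]
  exact (LinearEquiv.finrank_eq (((Submodule.equivMapOfInjective (f.restrictScalars ℤ) hinj
    L₀).trans (LinearEquiv.ofEq _ _ h_img)).symm))

variable (K : Type) [Field K] [NumberField K]

/-- `a ↦ okSmul K a x` as an additive monoid hom. -/
def okSmulHom {m : ℕ} (x : Fin m → MS K) : 𝓞 K →+ (Fin m → MS K) where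
  toFun a := okSmul K a x
  map_zero' := funext fun t => by simp [okSmul]
  map_add' a b := funext fun t => by simp [okSmul, map_add, add_mul]

@[simp] lemma okSmulHom_apply {m : ℕ} (x : Fin m → MS K) (a : 𝓞 K) :
    okSmulHom K x a = okSmul K a x := rfl

/-- `x ↦ okSmul K a x` as an `ℝ`-linear map. -/
def mulLin {m : ℕ} (a : 𝓞 K) : (Fin m → MS K) →ₗ[ℝ] (Fin m → MS K) where
  toFun x := okSmul K a x
  map_add' x y := funext fun t => by simp [okSmul, mul_add]
  map_smul' c x := funext fun t => by simp [okSmul, mul_smul_comm]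

@[simp] lemma mulLin_apply {m : ℕ} (a : 𝓞 K) (x : Fin m → MS K) :
    mulLin K a x = okSmul K a x := rfl

lemma kspan_mono {m k : ℕ} (l : Fin k → (Fin m → MS K)) {i i' : ℕ} (h : i ≤ i') :
    KSpanUpTo K l i ⊆ KSpanUpTo K l i' := by
  rintro x ⟨c, rfl⟩
  refine ⟨fun j => if (j : ℕ) < i then c j else 0, ?_⟩
  funext t
  rw [Finset.sum_filter, Finset.sum_filter]
  refine Finset.sum_congr rfl fun j _ => ?_
  by_cases hj : (j : ℕ) < i
  · simp [hj, lt_of_lt_of_le hj h]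
  · simp [hj]

lemma zero_mem_kspan {m k : ℕ} (l : Fin k → (Fin m → MS K)) (i : ℕ) :
    (0 : Fin m → MS K) ∈ KSpanUpTo K l i := by
  refine ⟨0, ?_⟩
  funext t
  simp

end CovAux

/-!
STATEMENT 10: Let K be a number field of degree d and fix integers m ≥ k ≥ 1. There exists
a constant C > 0, independent of Λ, such that for every O_K-module lattice Λ ⊆ K_ℝ^m of
O_K-rank k with successive K-minima l₁, …, l_k, the covering radius satisfies
ρ(Λ) ≤ C·‖l_k‖.
-/

open Paper NumberField

theorem covering_radius_le_last_minimum (K : Type) [Field K] [NumberField K]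
    (m k : ℕ) (hk : 1 ≤ k) (hkm : k ≤ m) :
    ∃ C : ℝ, 0 < C ∧
      ∀ Λ : Set (Fin m → MS K), IsOKModuleLattice K Λ →
        -- `Λ` has `O_K`-rank `k`
        Module.finrank ℝ (Submodule.span ℝ Λ) = k * Module.finrank ℚ K →
        ∀ l : Fin k → (Fin m → MS K), IsSuccKMinima K Λ l →
          covRadV ((eucVec K m) '' Λ) ≤ C * vnorm K (l ⟨k - 1, by omega⟩) := by
  classical
  let ω : Basis (Module.Free.ChooseBasisIndex ℤ (𝓞 K)) ℤ (𝓞 K) := Module.Free.chooseBasis ℤ (𝓞 K)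
  set e := eucVec K m with he
  let T : 𝓞 K → (EuclideanSpace ℝ (Fin m × RIx K) →L[ℝ] EuclideanSpace ℝ (Fin m × RIx K)) :=
    fun a => (e.toLinearMap ∘ₗ CovAux.mulLin K a ∘ₗ e.symm.toLinearMap).toContinuousLinearMap
  have hvnorm : ∀ x : Fin m → MS K, vnorm K x = ‖e x‖ := fun x => rfl
  have hT : ∀ (a : 𝓞 K) (x : Fin m → MS K), vnorm K (okSmul K a x) ≤ ‖T a‖ * vnorm K x := by
    intro a x
    have h1 : e (okSmul K a x) = T a (e x) := by
      simp [T, LinearMap.coe_toContinuousLinearMap']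
    rw [hvnorm, hvnorm, h1]
    exact (T a).le_opNorm (e x)
  set B : ℝ := ∑ j : (Module.Free.ChooseBasisIndex ℤ (𝓞 K)), ‖T (ω j)‖ with hB
  have hB0 : 0 ≤ B := Finset.sum_nonneg fun j _ => norm_nonneg _
  have hkB : (0:ℝ) ≤ (k : ℝ) * B := mul_nonneg (by positivity) hB0
  refine ⟨(k : ℝ) * B + 1, by linarith, ?_⟩
  intro Λ hΛ hrank l hl
  obtain ⟨h0Λ, haddΛ, hnegΛ, hsmulΛ, ε, hε, hsep⟩ := hΛ
  set kk : Fin k := ⟨k - 1, by omega⟩ with hkk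
  set N := vnorm K (l kk) with hN
  have hvz : ∀ x : Fin m → MS K, vnorm K x = 0 → x = 0 := by
    intro x hx
    rw [hvnorm, norm_eq_zero] at hx
    have := congrArg e.symm hx
    simpa using this
  have hNpos : 0 < N := by
    rcases lt_or_eq_of_le (norm_nonneg (e (l kk))) with h | h
    · exact h
    · exfalso
      have hz : l kk = 0 := hvz _ (by rw [hvnorm]; exact h.symm)
      exact (hl kk).2.1 (hz ▸ CovAux.zero_mem_kspan K l _)
  have hNnonneg : 0 ≤ N := le_of_lt hNpos
  have hli : ∀ i : Fin k, vnorm K (l i) ≤ N := by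
    intro i
    refine (hl i).2.2 (l kk) (hl kk).1 ?_
    intro hmem
    have hkv : (kk : ℕ) = k - 1 := rfl
    have hik : (i : ℕ) < k := i.isLt
    exact (hl kk).2.1 (CovAux.kspan_mono K l (by omega : (i : ℕ) ≤ (kk : ℕ)) hmem)
  set w : Fin k × (Module.Free.ChooseBasisIndex ℤ (𝓞 K)) → (Fin m → MS K) := fun t => okSmul K (ω t.2) (l t.1) with hw
  have hwΛ : ∀ t, w t ∈ Λ := fun t => hsmulΛ _ _ (hl t.1).1
  have hwnorm : ∀ t, vnorm K (w t) ≤ ‖T (ω t.2)‖ * N :=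
    fun t => le_trans (hT _ _) (mul_le_mul_of_nonneg_left (hli t.1) (norm_nonneg _))
  let G : AddSubgroup (Fin m → MS K) :=
    { carrier := Λ
      add_mem' := fun ha hb => haddΛ _ ha _ hb
      zero_mem' := h0Λ
      neg_mem' := fun ha => hnegΛ _ ha }
  -- ℤ-linear independence of the `w`'s
  have hLI : LinearIndependent ℤ w := by
    by_contra hnli
    obtain ⟨g, hg0, t0, hgt0⟩ := Fintype.not_linearIndependent_iff.mp hnli
    set c : Fin k → 𝓞 K := fun i => ∑ j : (Module.Free.ChooseBasisIndex ℤ (𝓞 K)), g (i, j) • ω j with hc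
    have hrel : ∑ i : Fin k, okSmul K (c i) (l i) = 0 := by
      rw [← hg0, Fintype.sum_prod_type]
      refine Finset.sum_congr rfl fun i _ => ?_
      rw [← CovAux.okSmulHom_apply, hc, map_sum]
      refine Finset.sum_congr rfl fun j _ => ?_
      rw [map_zsmul, CovAux.okSmulHom_apply]
    have hc0 : c t0.1 ≠ 0 := by
      intro hczero
      refine hgt0 ?_
      have := Fintype.linearIndependent_iff.mp ω.linearIndependent (fun j => g (t0.1, j))
        (by exact hczero) t0.2
      simpa using this
    set S : Finset (Fin k) := Finset.univ.filter (fun i => c i ≠ 0) with hS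
    have hSne : S.Nonempty := ⟨t0.1, by simp [hS, hc0]⟩
    set r : Fin k := S.max' hSne with hr
    have hcr : c r ≠ 0 := by
      have := S.max'_mem hSne
      simpa [hS] using this
    have hgtr : ∀ i : Fin k, r < i → c i = 0 := by
      intro i hi
      by_contra hne
      exact absurd (S.le_max' i (by simp [hS, hne])) (not_le.mpr hi)
    have hcrK : (algebraMap (𝓞 K) K) (c r) ≠ 0 := by
      intro hzz
      exact hcr (NumberField.RingOfIntegers.coe_injective (by simpa using hzz))
    refine (hl r).2.1 ?_
    refine ⟨fun i => -((algebraMap (𝓞 K) K (c i)) * ((algebraMap (𝓞 K) K (c r))⁻¹)), ?_⟩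
    funext t
    set A : Fin k → MS K := fun i => NumberField.mixedEmbedding K (algebraMap (𝓞 K) K (c i))
      with hA
    have h0 : ∑ i : Fin k, A i * l i t = 0 := by
      have := congrFun hrel t
      simpa [okSmul, hA] using this
    set P : Finset (Fin k) := Finset.univ.filter (fun i : Fin k => (i : ℕ) < (r : ℕ)) with hP
    have hsplit : A r * l r t + ∑ i ∈ P, A i * l i t = 0 := by
      rw [← h0, ← Finset.sum_filter_add_sum_filter_not Finset.univ
        (fun i : Fin k => (i : ℕ) < (r : ℕ)) (fun i => A i * l i t), add_comm]
      congr 1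
      rw [Finset.sum_eq_single r]
      · intro b hb hbr
        have hb' : ¬ ((b : ℕ) < (r : ℕ)) := by
          simpa [hP] using hb
        have hrb : r < b := by
          rcases lt_trichotomy r b with h | h | h
          · exact h
          · exact absurd h hbr.symm
          · exact absurd (Fin.lt_def.mp h) hb'
        have : c b = 0 := hgtr b hrb
        simp [hA, this]
      · intro hrmem
        exfalso
        exact hrmem (by simp [hP])
    set u : MS K := NumberField.mixedEmbedding K ((algebraMap (𝓞 K) K (c r))⁻¹) with hu
    have h1 : u * A r = 1 := by
      simp only [hu, hA]
      rw [← _root_.map_mul, inv_mul_cancel₀ hcrK, _root_.map_one]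
    have key : l r t = ∑ i ∈ P, (-(A i * u)) * l i t := by
      calc l r t = (u * A r) * l r t := by rw [h1, one_mul]
        _ = u * (A r * l r t) := by ring
        _ = u * (-(∑ i ∈ P, A i * l i t)) := by
            rw [eq_neg_of_add_eq_zero_left hsplit]
        _ = ∑ i ∈ P, (-(A i * u)) * l i t := by
            rw [mul_neg, Finset.mul_sum, ← Finset.sum_neg_distrib]
            exact Finset.sum_congr rfl fun i _ => by ring
    rw [key]
    refine Finset.sum_congr rfl fun i _ => ?_
    simp only [hA, hu]
    rw [← _root_.map_mul, ← _root_.map_neg]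
  -- the span over ℤ of the `w`'s in Euclidean coordinates
  set M : Submodule ℤ (EuclideanSpace ℝ (Fin m × RIx K)) :=
    Submodule.span ℤ (Set.range (fun t => e (w t))) with hM
  have hMsub : (M : Set (EuclideanSpace ℝ (Fin m × RIx K))) ⊆ e '' Λ := by
    have hle : M ≤ (AddSubgroup.map e.toLinearMap.toAddMonoidHom G).toIntSubmodule := by
      rw [hM, Submodule.span_le]
      rintro x ⟨t, rfl⟩
      exact ⟨w t, hwΛ t, rfl⟩
    intro x hx
    obtain ⟨y, hy, rfl⟩ := hle hx
    exact ⟨y, hy, rfl⟩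
  have hdisc : DiscreteTopology M := by
    apply discreteTopology_of_isOpen_singleton_zero
    have hset : ({0} : Set M) = (Subtype.val) ⁻¹' Metric.ball (0 : EuclideanSpace ℝ (Fin m × RIx K)) ε := by
      ext x
      simp only [Set.mem_singleton_iff, Set.mem_preimage, Metric.mem_ball, dist_zero_right]
      constructor
      · rintro rfl
        simpa using hε
      · intro hx
        obtain ⟨y, hy, hxy⟩ := hMsub x.2
        have hy0 : y = 0 := hsep y hy (by rw [hvnorm, hxy]; exact hx)
        apply Subtype.ext
        rw [← hxy, hy0, map_zero]
        rfl
    rw [hset]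
    exact (Metric.isOpen_ball).preimage continuous_subtype_val
  have hMrank : Module.finrank ℤ M =
      Module.finrank ℝ (Submodule.span ℝ (M : Set (EuclideanSpace ℝ (Fin m × RIx K)))) :=
    CovAux.aux_finrank_int_eq M
  have hcard : Fintype.card (Fin k × (Module.Free.ChooseBasisIndex ℤ (𝓞 K))) = k * Module.finrank ℚ K := by
    rw [Fintype.card_prod, Fintype.card_fin, ← Module.finrank_eq_card_chooseBasisIndex,
      NumberField.RingOfIntegers.rank]
  have hLI' : LinearIndependent ℤ (fun t => e (w t)) := by
    refine hLI.map' (e.toLinearMap.restrictScalars ℤ) ?_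
    rw [LinearMap.ker_eq_bot]
    exact fun x y hxy => e.injective hxy
  have hLIM : LinearIndependent ℤ
      (fun t => (⟨e (w t), Submodule.subset_span (Set.mem_range_self t)⟩ : M)) :=
    LinearIndependent.of_comp M.subtype hLI'
  have hge : k * Module.finrank ℚ K ≤ Module.finrank ℤ M := by
    rw [← hcard]
    exact hLIM.fintype_card_le_finrank
  have hΛrank : Module.finrank ℝ (Submodule.span ℝ (e '' Λ)) = k * Module.finrank ℚ K := by
    have h1 : Submodule.map e.toLinearMap (Submodule.span ℝ Λ) = Submodule.span ℝ (e '' Λ) := by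
      rw [Submodule.map_span]
      simp only [LinearEquiv.coe_coe]
    rw [← h1, LinearEquiv.finrank_map_eq, hrank]
  have hMle : Submodule.span ℝ (M : Set (EuclideanSpace ℝ (Fin m × RIx K))) ≤
      Submodule.span ℝ (e '' Λ) :=
    Submodule.span_le.mpr (hMsub.trans Submodule.subset_span)
  have hMeq : Submodule.span ℝ (M : Set (EuclideanSpace ℝ (Fin m × RIx K))) =
      Submodule.span ℝ (e '' Λ) := by
    refine Submodule.eq_of_le_of_finrank_le hMle ?_
    rw [hΛrank, ← hMrank]
    exact hge
  have hspanw : Submodule.span ℝ (Set.range (fun t => e (w t))) = Submodule.span ℝ (e '' Λ) := by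
    rw [← hMeq, hM, Submodule.span_span_of_tower]
  -- the covering bound
  rw [covRadV]
  have hCN : 0 ≤ ((k : ℝ) * B + 1) * N := by positivity
  refine Real.iSup_le (fun x => ?_) hCN
  have hx : (x : EuclideanSpace ℝ (Fin m × RIx K)) ∈
      Submodule.span ℝ (Set.range (fun t => e (w t))) := by
    rw [hspanw]
    exact x.2
  obtain ⟨cf, hcf⟩ := (mem_span_range_iff_exists_fun ℝ).mp hx
  set v₀ : Fin m → MS K := ∑ t : Fin k × (Module.Free.ChooseBasisIndex ℤ (𝓞 K)), round (cf t) • w t with hv₀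
  have hv₀Λ : v₀ ∈ Λ := by
    have : v₀ ∈ G := AddSubgroup.sum_mem G (fun t _ => AddSubgroup.zsmul_mem G (hwΛ t) _)
    exact this
  have hbdd : BddBelow (Set.range (fun v : (e '' Λ) => ‖(x : EuclideanSpace ℝ (Fin m × RIx K)) - (v : EuclideanSpace ℝ (Fin m × RIx K))‖)) := by
    refine ⟨0, ?_⟩
    rintro y ⟨v, rfl⟩
    positivity
  refine ciInf_le_of_le hbdd (⟨e v₀, ⟨v₀, hv₀Λ, rfl⟩⟩ : (e '' Λ : Set (EuclideanSpace ℝ (Fin m × RIx K)))) ?_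
  have hev₀ : e v₀ = ∑ t : Fin k × (Module.Free.ChooseBasisIndex ℤ (𝓞 K)), (round (cf t) : ℝ) • e (w t) := by
    rw [hv₀, map_sum]
    exact Finset.sum_congr rfl fun t _ => by
      rw [map_zsmul, Int.cast_smul_eq_zsmul ℝ]
  have hdiff : (x : EuclideanSpace ℝ (Fin m × RIx K)) - e v₀ =
      ∑ t : Fin k × (Module.Free.ChooseBasisIndex ℤ (𝓞 K)), (cf t - (round (cf t) : ℝ)) • e (w t) := by
    rw [hev₀, ← hcf, ← Finset.sum_sub_distrib]
    exact Finset.sum_congr rfl fun t _ => (sub_smul _ _ _).symm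
  calc ‖(x : EuclideanSpace ℝ (Fin m × RIx K)) - e v₀‖
      ≤ ∑ t : Fin k × (Module.Free.ChooseBasisIndex ℤ (𝓞 K)), ‖(cf t - (round (cf t) : ℝ)) • e (w t)‖ := by
        rw [hdiff]
        exact norm_sum_le _ _
    _ ≤ ∑ t : Fin k × (Module.Free.ChooseBasisIndex ℤ (𝓞 K)), (1/2) * (‖T (ω t.2)‖ * N) := by
        refine Finset.sum_le_sum fun t _ => ?_
        rw [norm_smul]
        have h1 : ‖cf t - (round (cf t) : ℝ)‖ ≤ 1/2 := by
          rw [Real.norm_eq_abs]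
          exact abs_sub_round _
        have h2 : ‖e (w t)‖ ≤ ‖T (ω t.2)‖ * N := by
          rw [← hvnorm]
          exact hwnorm t
        exact mul_le_mul h1 h2 (norm_nonneg _) (by norm_num)
    _ = (k : ℝ) * ((1/2) * (B * N)) := by
        rw [Fintype.sum_prod_type]
        dsimp only
        trans ∑ _i : Fin k, ((1/2) * (B * N))
        · refine Finset.sum_congr rfl fun i _ => ?_
          rw [hB, Finset.sum_mul, Finset.mul_sum]
        · rw [Finset.sum_const, Finset.card_univ, Fintype.card_fin, nsmul_eq_mul]
    _ ≤ ((k : ℝ) * B + 1) * N := by nlinarith [hB0, hNnonneg, (by positivity : (0:ℝ) ≤ (k:ℝ))]
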